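/- arXiv:1108.0547 — 6 statements merged into one kernel-verified Lean document; each statement's English description precedes it below -/
import Mathlib

section
/- Let f(X) be a monic polynomial in ℤ[X] of degree n ≥ 1, and let I be the ideal of ℤ[X₁,…,X_m] generated by f(X₁),…,f(X_m). Then there exists a monic polynomial h(X) ∈ ℤ[X] of degree at most n^m such that h(X₁⋯X_m) ∈ I. -/
open Polynomial MvPolynomial

theorem aux_charpoly {ι : Type*} [Fintype ι] [DecidableEq ι] (R : Type*) [CommRing R]
    [Nontrivial R] {M : Type*} [AddCommGroup M] [Module R M] (b : ι → M)
    (hb : Submodule.span R (Set.range b) = ⊤) (f : Module.End R M) :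
    ∃ p : R[X], p.Monic ∧ p.natDegree = Fintype.card ι ∧ Polynomial.aeval f p = 0 := by
  obtain ⟨A, H⟩ := Matrix.isRepresentation.toEnd_surjective R b hb f
  refine ⟨A.1.charpoly, A.1.charpoly_monic, A.1.charpoly_natDegree_eq_dim, ?_⟩
  rw [← H, Polynomial.aeval_algHom_apply, ← map_zero (Matrix.isRepresentation.toEnd R b hb)]
  congr 1
  ext1
  rw [Polynomial.aeval_subalgebra_coe, Matrix.aeval_self_charpoly, Subalgebra.coe_zero]

/-- If `f ∈ ℤ[X]` is monic of degree `n ≥ 1` and `I` is the ideal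
of `ℤ[X₁,…,X_m]` generated by `f(X₁), …, f(X_m)`, then there is a monic
`h ∈ ℤ[X]` of degree at most `n^m` with `h(X₁⋯X_m) ∈ I`. -/
theorem stmt2 (m n : ℕ) (hn : 1 ≤ n) (f : Polynomial ℤ) (hf : f.Monic)
    (hdeg : f.natDegree = n)
    (I : Ideal (MvPolynomial (Fin m) ℤ))
    (hI : I = Ideal.span
      (Set.range fun i : Fin m => Polynomial.aeval (MvPolynomial.X i) f)) :
    ∃ h : Polynomial ℤ, h.Monic ∧ h.natDegree ≤ n ^ m ∧
      Polynomial.aeval (∏ i : Fin m, MvPolynomial.X i :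
        MvPolynomial (Fin m) ℤ) h ∈ I := by
  classical
  set A := MvPolynomial (Fin m) ℤ ⧸ I with hA
  set π : MvPolynomial (Fin m) ℤ →ₐ[ℤ] A := Ideal.Quotient.mkₐ ℤ I with hπ
  set b : (Fin m → Fin n) → A := fun a => π (∏ i, MvPolynomial.X i ^ (a i : ℕ)) with hb
  set T : Submodule ℤ A := Submodule.span ℤ (Set.range b) with hT
  have hfmem : ∀ j : Fin m,
      (Polynomial.aeval (MvPolynomial.X j) f : MvPolynomial (Fin m) ℤ) ∈ I := by
    intro j; rw [hI]; exact Ideal.subset_span ⟨j, rfl⟩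
  set r : Polynomial ℤ := Polynomial.X ^ n - f with hr
  have hfr : f + r = Polynomial.X ^ n := by rw [hr]; ring
  have hrdeg : r.natDegree < n := by
    rcases eq_or_ne r 0 with h | h
    · simpa [h] using (show 0 < n by omega)
    · rw [Polynomial.natDegree_lt_iff_degree_lt h]
      have := Polynomial.degree_sub_lt (p := Polynomial.X ^ n) (q := f)
        (by rw [Polynomial.degree_X_pow, Polynomial.degree_eq_natDegree hf.ne_zero, hdeg])
        (pow_ne_zero n Polynomial.X_ne_zero) (by simp [hf.leadingCoeff])
      simpa [Polynomial.degree_X_pow] using this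
  have hsplit : ∀ (c : Fin m → ℕ) (j : Fin m),
      (∏ i, MvPolynomial.X i ^ c i : MvPolynomial (Fin m) ℤ)
      = MvPolynomial.X j ^ c j * ∏ i ∈ Finset.univ.erase j, MvPolynomial.X i ^ c i :=
    fun c j => (Finset.mul_prod_erase Finset.univ _ (Finset.mem_univ j)).symm
  -- key: every monomial lands in T
  have key : ∀ N (c : Fin m → ℕ), (∑ i, c i) ≤ N →
      π (∏ i, MvPolynomial.X i ^ c i) ∈ T := by
    intro N
    induction N with
    | zero =>
      intro c hc
      have hc0 : ∀ i, c i = 0 := by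
        intro i
        have := Finset.single_le_sum (f := c) (fun i _ => Nat.zero_le _) (Finset.mem_univ i)
        omega
      have : π (∏ i, MvPolynomial.X i ^ c i) = b (fun _ => ⟨0, hn⟩) := by
        simp [hb, hc0]
      rw [this]
      exact Submodule.subset_span ⟨_, rfl⟩
    | succ N ih =>
      intro c hc
      by_cases hall : ∀ i, c i < n
      · have : π (∏ i, MvPolynomial.X i ^ c i) = b (fun i => ⟨c i, hall i⟩) := rfl
        rw [this]
        exact Submodule.subset_span ⟨_, rfl⟩
      push_neg at hall
      obtain ⟨j, hj⟩ := hall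
      have hupd : ∀ (v k : ℕ),
          (∏ i ∈ Finset.univ.erase j, MvPolynomial.X i ^ (Function.update c j v) i
            : MvPolynomial (Fin m) ℤ)
          = ∏ i ∈ Finset.univ.erase j, MvPolynomial.X i ^ c i := by
        intro v k
        refine Finset.prod_congr rfl fun i hi => ?_
        rw [Function.update_of_ne (Finset.ne_of_mem_erase hi)]
      set P : MvPolynomial (Fin m) ℤ :=
        ∏ i, MvPolynomial.X i ^ (Function.update c j (c j - n)) i with hP
      have hprod : (∏ i, MvPolynomial.X i ^ c i) = MvPolynomial.X j ^ n * P := by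
        rw [hP, hsplit c j, hsplit (Function.update c j (c j - n)) j, Function.update_self,
          hupd _ 0, ← mul_assoc, ← pow_add, Nat.add_sub_cancel' hj]
      have hXn : (MvPolynomial.X j : MvPolynomial (Fin m) ℤ) ^ n
          = Polynomial.aeval (MvPolynomial.X j) f + Polynomial.aeval (MvPolynomial.X j) r := by
        rw [← map_add, hfr, map_pow, Polynomial.aeval_X]
      have h1 : π (Polynomial.aeval (MvPolynomial.X j) f * P) = 0 := by
        rw [hπ, Ideal.Quotient.mkₐ_eq_mk, Ideal.Quotient.eq_zero_iff_mem]
        exact I.mul_mem_right P (hfmem j)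
      have h2 : Polynomial.aeval (MvPolynomial.X j : MvPolynomial (Fin m) ℤ) r
          = ∑ k ∈ Finset.range n, r.coeff k • (MvPolynomial.X j : MvPolynomial (Fin m) ℤ) ^ k :=
        Polynomial.aeval_eq_sum_range' hrdeg _
      have hXkP : ∀ k, (MvPolynomial.X j : MvPolynomial (Fin m) ℤ) ^ k * P
          = ∏ i, MvPolynomial.X i ^ (Function.update c j (c j - n + k)) i := by
        intro k
        rw [hP, hsplit (Function.update c j (c j - n + k)) j, Function.update_self, hupd _ 0,
          hsplit (Function.update c j (c j - n)) j, Function.update_self, hupd _ 0,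
          ← mul_assoc, ← pow_add, Nat.add_comm k (c j - n)]
      have hkey : π (∏ i, MvPolynomial.X i ^ c i)
          = ∑ k ∈ Finset.range n,
            r.coeff k • π (∏ i, MvPolynomial.X i ^ (Function.update c j (c j - n + k)) i) := by
        rw [hprod, hXn, add_mul, map_add, h1, zero_add, h2, Finset.sum_mul, map_sum]
        refine Finset.sum_congr rfl fun k hk => ?_
        rw [smul_mul_assoc, map_smul, hXkP]
      rw [hkey]
      refine Submodule.sum_mem _ fun k hk => Submodule.smul_mem _ _ (ih _ ?_)
      have e1 : ∑ i, (Function.update c j (c j - n + k)) i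
          = (c j - n + k) + ∑ i ∈ Finset.univ \ {j}, c i :=
        Finset.sum_update_of_mem (Finset.mem_univ j) _ _
      have e2 : ∑ i, c i = c j + ∑ i ∈ Finset.univ.erase j, c i :=
        (Finset.add_sum_erase Finset.univ c (Finset.mem_univ j)).symm
      rw [e1, ← Finset.erase_eq]
      have hk' : k < n := Finset.mem_range.mp hk
      omega
  have hspan : Submodule.span ℤ (Set.range b) = ⊤ := by
    rw [Submodule.eq_top_iff']
    intro x
    obtain ⟨q, rfl⟩ := Ideal.Quotient.mkₐ_surjective ℤ I x
    rw [show (Ideal.Quotient.mkₐ ℤ I) q = π q from rfl, q.as_sum, map_sum]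
    refine Submodule.sum_mem _ fun v hv => ?_
    have hmono : π ((MvPolynomial.monomial v) (MvPolynomial.coeff v q))
        = (MvPolynomial.coeff v q) • π (∏ i, MvPolynomial.X i ^ v i) := by
      rw [MvPolynomial.monomial_eq, ← MvPolynomial.smul_eq_C_mul, map_smul]
      congr 2
      exact Finset.prod_subset (Finset.subset_univ _) (fun i _ hi => by
        simp [Finsupp.notMem_support_iff.mp hi])
    rw [hmono]
    exact Submodule.smul_mem _ _ (key _ _ le_rfl)
  obtain ⟨p, hpm, hpd, hpz⟩ := aux_charpoly ℤ b hspan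
    (Algebra.lmul ℤ A (π (∏ i : Fin m, MvPolynomial.X i)))
  refine ⟨p, hpm, ?_, ?_⟩
  · rw [hpd]
    exact le_of_eq (by simp)
  · have h1 : Polynomial.aeval (Algebra.lmul ℤ A (π (∏ i : Fin m, MvPolynomial.X i))) p
        = Algebra.lmul ℤ A (Polynomial.aeval (π (∏ i : Fin m, MvPolynomial.X i)) p) :=
      Polynomial.aeval_algHom_apply _ _ _
    rw [hpz] at h1
    have h3 : Polynomial.aeval (π (∏ i : Fin m, MvPolynomial.X i)) p = 0 := by
      have h4 : (0 : A) = Polynomial.aeval (π (∏ i : Fin m, MvPolynomial.X i)) p * 1 :=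
        congrArg (fun e : Module.End ℤ A => e 1) h1
      rw [mul_one] at h4
      exact h4.symm
    rw [Polynomial.aeval_algHom_apply, hπ, Ideal.Quotient.mkₐ_eq_mk,
      Ideal.Quotient.eq_zero_iff_mem] at h3
    exact h3
end

section
/- Let A be a finite abelian p-group (written multiplicatively) and let g be an automorphism of A. Suppose there are monic polynomials witnessing: (a) [A,_r g] ≤ A^p, meaning (g−1)^r annihilates A/A^p, for all powers A^{p^i} in place of A as well (i.e., (g−1)^r maps A^{p^i} into A^{p^{i+1}} for all i ≥ 0), and (b) A^{p^s (g^k−1)^ℓ} = 1 for some integers s, k, ℓ. Then [A,_n g^k] = 1 where n = s·r + ℓ, i.e., (g^k − 1)^{sr+ℓ} annihilates A. -/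
/-- Let `A` be a finite abelian `p`-group (written additively here)
and `g` an automorphism of `A` (a unit of `End(A)`). Suppose
(a) `(g - 1)^r` maps `A^{p^i}` (i.e. `p^i • A`) into `A^{p^{i+1}}` for all `i ≥ 0`, and
(b) `p^s • (g^k - 1)^ℓ` annihilates `A`.
Then `(g^k - 1)^{s·r + ℓ}` annihilates `A`, i.e. `[A,_n g^k] = 1` with `n = s·r + ℓ`. -/
theorem stmt4 (p : ℕ) (hp : p.Prime) (A : Type*) [AddCommGroup A] [Finite A]
    (hpA : ∀ a : A, ∃ i : ℕ, (p ^ i : ℕ) • a = 0)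
    (g : (AddMonoid.End A)ˣ) (r s k ℓ : ℕ)
    (ha : ∀ (i : ℕ) (a : A), ∃ b : A,
      (((g : AddMonoid.End A) - 1) ^ r) ((p ^ i : ℕ) • a) = (p ^ (i + 1) : ℕ) • b)
    (hb : ∀ a : A, (p ^ s : ℕ) • ((((g : AddMonoid.End A) ^ k - 1) ^ ℓ) a) = 0) :
    ∀ a : A, (((g : AddMonoid.End A) ^ k - 1) ^ (s * r + ℓ)) a = 0 := by
  set G : AddMonoid.End A := (g : AddMonoid.End A) with hG
  set e : AddMonoid.End A := G ^ k - 1 with he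
  set S : AddMonoid.End A := ∑ i ∈ Finset.range k, G ^ i with hS
  have hfac : e = S * (G - 1) := (geom_sum_mul G k).symm
  have hcomm : Commute S (G - 1) := by
    apply Commute.sub_right _ (Commute.one_right S)
    exact Commute.sum_left _ _ _ fun i _ => Commute.pow_self G i
  -- (a) holds for e as well
  have ha' : ∀ (i : ℕ) (a : A), ∃ b : A,
      (e ^ r) ((p ^ i : ℕ) • a) = (p ^ (i + 1) : ℕ) • b := by
    intro i a
    obtain ⟨b, hab⟩ := ha i a
    refine ⟨(S ^ r) b, ?_⟩
    have : e ^ r = S ^ r * (G - 1) ^ r := by rw [hfac, hcomm.mul_pow]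
    rw [this]
    show (S ^ r) (((G - 1) ^ r) ((p ^ i : ℕ) • a)) = _
    rw [hab]
    exact AddMonoidHom.map_nsmul (S ^ r) _ b
  -- iterate: e^(j*r) a ∈ p^j • A
  have key : ∀ (j : ℕ) (a : A), ∃ b : A, (e ^ (j * r)) a = (p ^ j : ℕ) • b := by
    intro j
    induction j with
    | zero => intro a; exact ⟨a, by simp⟩
    | succ j ih =>
      intro a
      obtain ⟨b, hb1⟩ := ih a
      obtain ⟨c, hc⟩ := ha' j b
      refine ⟨c, ?_⟩
      have : e ^ ((j + 1) * r) = e ^ r * e ^ (j * r) := by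
        rw [← pow_add]; ring_nf
      rw [this]
      show (e ^ r) ((e ^ (j * r)) a) = _
      rw [hb1, hc]
  intro a
  obtain ⟨b, hb1⟩ := key s a
  have : e ^ (s * r + ℓ) = e ^ ℓ * e ^ (s * r) := by rw [← pow_add]; ring_nf
  rw [this]
  show (e ^ ℓ) ((e ^ (s * r)) a) = 0
  rw [hb1, map_nsmul (e ^ ℓ)]
  exact hb b
end

section
/- Let G be a group with a normal subgroup N such that N is nilpotent of class k and G/N' is nilpotent of class c, where N' is the derived subgroup of N. Then G is nilpotent, of class bounded by a function of k and c only. -/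
open Subgroup
open scoped commutatorElement

section Helpers

variable {G : Type*} [Group G]

/-- An `iSup` of normal subgroups is normal. -/
lemma normal_iSup_aux {ι : Sort*} (H : ι → Subgroup G) (h : ∀ t, (H t).Normal) :
    (⨆ t, H t).Normal := by
  constructor
  intro x hx g
  refine Subgroup.iSup_induction H (C := fun x => g * x * g⁻¹ ∈ ⨆ t, H t) hx
    (fun t x hx => Subgroup.mem_iSup_of_mem t ((h t).conj_mem x hx g))
    (by simpa using Subgroup.one_mem _) ?_
  intro a b ha hb
  have : g * (a * b) * g⁻¹ = (g * a * g⁻¹) * (g * b * g⁻¹) := by group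
  rw [this]; exact Subgroup.mul_mem _ ha hb

/-- Commutator with an `iSup` on the left, bounded by a normal subgroup. -/
lemma commutator_iSup_le_aux {ι : Sort*} (H : ι → Subgroup G) (K X : Subgroup G) [hX : X.Normal]
    (h : ∀ t, ⁅H t, K⁆ ≤ X) : ⁅⨆ t, H t, K⁆ ≤ X := by
  rw [Subgroup.commutator_le]
  intro g hg k hk
  refine Subgroup.iSup_induction H (C := fun g => ⁅g, k⁆ ∈ X) hg
    (fun t x hx => (Subgroup.commutator_le.mp (h t)) x hx k hk)
    (by simpa using X.one_mem) ?_
  intro x y hx hy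
  have : ⁅x * y, k⁆ = x * ⁅y, k⁆ * x⁻¹ * ⁅x, k⁆ := by group
  rw [this]
  exact X.mul_mem (hX.conj_mem _ hy x) hx

/-- The three subgroups lemma, general form for normal subgroups. -/
lemma three_subgroups_le (A B C : Subgroup G) [A.Normal] [B.Normal] [C.Normal] :
    ⁅⁅A, B⁆, C⁆ ≤ ⁅⁅B, C⁆, A⁆ ⊔ ⁅⁅C, A⁆, B⁆ := by
  set X : Subgroup G := ⁅⁅B, C⁆, A⁆ ⊔ ⁅⁅C, A⁆, B⁆ with hXdef
  haveI hX : X.Normal := Subgroup.sup_normal _ _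
  set π := QuotientGroup.mk' X with hπ
  have key : ∀ H K L : Subgroup G, ⁅⁅H, K⁆, L⁆ ≤ X →
      ⁅⁅H.map π, K.map π⁆, L.map π⁆ = ⊥ := by
    intro H K L h
    rw [← Subgroup.map_commutator, ← Subgroup.map_commutator, Subgroup.map_eq_bot_iff,
      QuotientGroup.ker_mk']
    exact h
  have h3 := Subgroup.commutator_commutator_eq_bot_of_rotate
    (key B C A le_sup_left) (key C A B le_sup_right)
  rw [← Subgroup.map_commutator, ← Subgroup.map_commutator, Subgroup.map_eq_bot_iff,
    QuotientGroup.ker_mk'] at h3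
  exact h3

end Helpers

section Hall

variable (G : Type*) [Group G] (N : Subgroup G)

/-- `hallD G N i` is the `i`-th term (0-indexed) of the lower central series of `N`,
as a subgroup of `G`. -/
def hallD : ℕ → Subgroup G
  | 0 => N
  | (i + 1) => ⁅hallD i, N⁆

/-- `hallV G N j = [N, G, G, ..., G]` (`j` times). -/
def hallV : ℕ → Subgroup G
  | 0 => N
  | (j + 1) => ⁅hallV j, ⊤⁆

/-- Hall's weighted subgroups. -/
def hallW : ℕ → ℕ → Subgroup G
  | 0, j => hallV G N j
  | (i + 1), j => ⨆ j1 : ℕ, ⁅hallW i j1, hallV G N (j - j1)⁆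

variable [hN : N.Normal]

lemma hallD_normal : ∀ i, (hallD G N i).Normal
  | 0 => hN
  | (i + 1) => by
      haveI := hallD_normal i
      exact Subgroup.commutator_normal _ _

lemma hallV_normal : ∀ j, (hallV G N j).Normal
  | 0 => hN
  | (j + 1) => by
      haveI := hallV_normal j
      exact Subgroup.commutator_normal _ _

lemma hallW_normal : ∀ i j, (hallW G N i j).Normal
  | 0, j => hallV_normal G N j
  | (i + 1), j => by
      refine normal_iSup_aux _ (fun j1 => ?_)
      haveI := hallW_normal i j1
      haveI := hallV_normal G N (j - j1)
      exact Subgroup.commutator_normal _ _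

lemma hallD_succ_le (i : ℕ) : hallD G N (i + 1) ≤ hallD G N i := by
  haveI := hallD_normal G N i
  exact Subgroup.commutator_le_left _ _

lemma hallV_succ_le (j : ℕ) : hallV G N (j + 1) ≤ hallV G N j := by
  haveI := hallV_normal G N j
  exact Subgroup.commutator_le_left _ _

lemma hallV_antitone : Antitone (hallV G N) :=
  antitone_nat_of_succ_le (hallV_succ_le G N)

lemma hallV_le_N (j : ℕ) : hallV G N j ≤ N :=
  hallV_antitone G N (Nat.zero_le j)

/-- `⁅D i, D j⁆ ≤ D (i + j + 1)`. -/
lemma hallD_commutator_le : ∀ j i, ⁅hallD G N i, hallD G N j⁆ ≤ hallD G N (i + j + 1)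
  | 0, i => le_of_eq rfl
  | (j + 1), i => by
      haveI := hallD_normal G N i
      haveI := hallD_normal G N j
      have h3 := three_subgroups_le (hallD G N j) N (hallD G N i)
      rw [Subgroup.commutator_comm (hallD G N i) (hallD G N (j + 1))]
      refine le_trans h3 (sup_le ?_ ?_)
      · rw [Subgroup.commutator_comm N (hallD G N i)]
        have h := hallD_commutator_le j (i + 1)
        rw [show i + 1 + j + 1 = i + (j + 1) + 1 from by omega] at h
        exact h
      · show (⁅(⁅hallD G N i, hallD G N j⁆ : Subgroup G), N⁆ : Subgroup G) ≤
          (⁅hallD G N (i + j + 1), N⁆ : Subgroup G)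
        exact Subgroup.commutator_mono (hallD_commutator_le j i) le_rfl

lemma hallW_le_D : ∀ i j, hallW G N i j ≤ hallD G N i
  | 0, j => hallV_le_N G N j
  | (i + 1), j => by
      refine iSup_le (fun j1 => ?_)
      calc (⁅hallW G N i j1, hallV G N (j - j1)⁆ : Subgroup G)
          ≤ ⁅hallD G N i, N⁆ :=
            Subgroup.commutator_mono (hallW_le_D i j1) (hallV_le_N G N _)
        _ = hallD G N (i + 1) := rfl

lemma hallD_le_W (i : ℕ) : hallD G N i ≤ hallW G N i 0 := by
  induction i with
  | zero => exact le_rfl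
  | succ i ih =>
      calc hallD G N (i + 1) = ⁅hallD G N i, N⁆ := rfl
        _ ≤ ⁅hallW G N i 0, hallV G N (0 - 0)⁆ := Subgroup.commutator_mono ih le_rfl
        _ ≤ ⨆ j1 : ℕ, ⁅hallW G N i j1, hallV G N (0 - j1)⁆ := le_iSup
            (fun j1 => (⁅hallW G N i j1, hallV G N (0 - j1)⁆ : Subgroup G)) 0
        _ = hallW G N (i + 1) 0 := rfl

/-- Leibniz rule: commutating `hallW i j` with `G` lands in `hallW i (j+1)`. -/
lemma hallW_comm_top_le : ∀ i j, ⁅hallW G N i j, ⊤⁆ ≤ hallW G N i (j + 1)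
  | 0, j => le_of_eq rfl
  | (i + 1), j => by
      haveI := hallW_normal G N (i + 1) (j + 1)
      refine commutator_iSup_le_aux _ _ _ (fun j1 => ?_)
      haveI := hallW_normal G N i j1
      haveI := hallV_normal G N (j - j1)
      have h3 := three_subgroups_le (hallW G N i j1) (hallV G N (j - j1)) (⊤ : Subgroup G)
      refine h3.trans (sup_le ?_ ?_)
      · -- ⁅⁅V (j-j1), ⊤⁆, W i j1⁆ ≤ ⁅W i j1, V (j-j1+1)⁆ ≤ W (i+1) (j+1)
        have e : (⁅hallV G N (j - j1), (⊤ : Subgroup G)⁆ : Subgroup G)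
            = hallV G N (j - j1 + 1) := rfl
        rw [e, Subgroup.commutator_comm]
        have hle : hallV G N (j - j1 + 1) ≤ hallV G N (j + 1 - j1) :=
          hallV_antitone G N (by omega)
        calc (⁅hallW G N i j1, hallV G N (j - j1 + 1)⁆ : Subgroup G)
            ≤ ⁅hallW G N i j1, hallV G N (j + 1 - j1)⁆ :=
              Subgroup.commutator_mono le_rfl hle
          _ ≤ ⨆ j2 : ℕ, ⁅hallW G N i j2, hallV G N (j + 1 - j2)⁆ := le_iSup
              (fun j2 => (⁅hallW G N i j2, hallV G N (j + 1 - j2)⁆ : Subgroup G)) j1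
          _ = hallW G N (i + 1) (j + 1) := rfl
      · -- ⁅⁅⊤, W i j1⁆, V (j-j1)⁆ ≤ ⁅W i (j1+1), V (j-j1)⁆ ≤ W (i+1) (j+1)
        have e : (⁅(⊤ : Subgroup G), hallW G N i j1⁆ : Subgroup G)
            = ⁅hallW G N i j1, (⊤ : Subgroup G)⁆ := Subgroup.commutator_comm _ _
        rw [e]
        have e2 : j + 1 - (j1 + 1) = j - j1 := by omega
        calc (⁅(⁅hallW G N i j1, (⊤ : Subgroup G)⁆ : Subgroup G), hallV G N (j - j1)⁆ : Subgroup G)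
            ≤ ⁅hallW G N i (j1 + 1), hallV G N (j - j1)⁆ :=
              Subgroup.commutator_mono (hallW_comm_top_le i j1) le_rfl
          _ = ⁅hallW G N i (j1 + 1), hallV G N (j + 1 - (j1 + 1))⁆ := by rw [e2]
          _ ≤ ⨆ j2 : ℕ, ⁅hallW G N i j2, hallV G N (j + 1 - j2)⁆ := le_iSup
              (fun j2 => (⁅hallW G N i j2, hallV G N (j + 1 - j2)⁆ : Subgroup G)) (j1 + 1)
          _ = hallW G N (i + 1) (j + 1) := rfl

/-- Pigeonhole: with `V c ≤ D 1`, large weight pushes `W` down the `D` series. -/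
lemma hallW_le_D_succ {c : ℕ} (hVc : hallV G N c ≤ hallD G N 1) :
    ∀ i j, (i + 1) * c ≤ j → hallW G N i j ≤ hallD G N (i + 1)
  | 0, j, hj => (hallV_antitone G N (by omega : c ≤ j)).trans hVc
  | (i + 1), j, hj => by
      refine iSup_le (fun j1 => ?_)
      by_cases hcase : c ≤ j - j1
      · refine le_trans (Subgroup.commutator_mono (hallW_le_D G N i j1)
          ((hallV_antitone G N hcase).trans hVc)) ?_
        exact hallD_commutator_le G N 1 i
      · have hj' : (i + 1) * c ≤ j1 := by
          have e : (i + 1 + 1) * c = (i + 1) * c + c := by ring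
          omega
        show (⁅hallW G N i j1, hallV G N (j - j1)⁆ : Subgroup G) ≤
          (⁅hallD G N (i + 1), N⁆ : Subgroup G)
        exact Subgroup.commutator_mono (hallW_le_D_succ hVc i j1 hj') (hallV_le_N G N _)

lemma lcs_le_hallW {a i : ℕ} (h : (⊤ : Subgroup G).lowerCentralSeries a ≤ hallW G N i 0) :
    ∀ j, (⊤ : Subgroup G).lowerCentralSeries (a + j) ≤ hallW G N i j := by
  intro j
  induction j with
  | zero => exact h
  | succ j ih =>
      have e : (⊤ : Subgroup G).lowerCentralSeries (a + (j + 1)) =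
          ⁅(⊤ : Subgroup G).lowerCentralSeries (a + j), (⊤ : Subgroup G)⁆ := rfl
      rw [e]
      exact (Subgroup.commutator_mono ih le_rfl).trans (hallW_comm_top_le G N i j)

end Hall

/-- The bound function for Hall's criterion. -/
def hallS (c : ℕ) : ℕ → ℕ
  | 0 => c
  | (i + 1) => hallS c i + (i + 1 + 1) * c

lemma hall_main (G : Type*) [Group G] (N : Subgroup G) [N.Normal] {c : ℕ}
    (hc : (⊤ : Subgroup G).lowerCentralSeries c ≤ hallD G N 1) :
    ∀ i, (⊤ : Subgroup G).lowerCentralSeries (hallS c i) ≤ hallD G N (i + 1) := by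
  intro i
  induction i with
  | zero => exact hc
  | succ i ih =>
      have h0 : (⊤ : Subgroup G).lowerCentralSeries (hallS c i) ≤ hallW G N (i + 1) 0 :=
        ih.trans (hallD_le_W G N (i + 1))
      have h1 := lcs_le_hallW G N h0 ((i + 1 + 1) * c)
      have hVc : hallV G N c ≤ hallD G N 1 := by
        have hV : ∀ j, hallV G N j ≤ (⊤ : Subgroup G).lowerCentralSeries j := by
          intro j
          induction j with
          | zero => exact le_top
          | succ j ihj => exact Subgroup.commutator_mono ihj le_rfl
        exact (hV c).trans hc
      have h2 := hallW_le_D_succ G N hVc (i + 1) ((i + 1 + 1) * c) le_rfl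
      exact h1.trans h2

/-- P. Hall's nilpotency criterion: there is a function `F` such
that whenever `N` is a normal subgroup of a group `G`, `N` is nilpotent of
class at most `k`, and `G/N'` is nilpotent of class at most `c`, then `G` is
nilpotent of class at most `F k c`. -/
theorem stmt6 :
    ∃ F : ℕ → ℕ → ℕ,
      ∀ (G : Type) [Group G] (N : Subgroup G) [N.Normal] (k c : ℕ),
        (⊤ : Subgroup N).lowerCentralSeries k = ⊥ →
        (⊤ : Subgroup (G ⧸ (⁅N, N⁆ : Subgroup G))).lowerCentralSeries c = ⊥ →
        (⊤ : Subgroup G).lowerCentralSeries (F k c) = ⊥ := by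
  refine ⟨fun k c => hallS c k, ?_⟩
  intro G _ N _ k c h1 h2
  -- Step 1: D k = ⊥ from h1
  have hmap : ∀ n, Subgroup.map N.subtype ((⊤ : Subgroup N).lowerCentralSeries n) = hallD G N n := by
    intro n
    induction n with
    | zero =>
        rw [Subgroup.lowerCentralSeries_zero, ← MonoidHom.range_eq_map, Subgroup.range_subtype]
        rfl
    | succ n ih =>
        have e : (⊤ : Subgroup ↥N).lowerCentralSeries (n + 1) =
            ⁅(⊤ : Subgroup ↥N).lowerCentralSeries n, (⊤ : Subgroup ↥N)⁆ := rfl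
        rw [e, Subgroup.map_commutator, ih, ← MonoidHom.range_eq_map, Subgroup.range_subtype]
        rfl
  have hDk : hallD G N k = ⊥ := by
    rw [← hmap k, h1, Subgroup.map_bot]
  -- Step 2: lcs G c ≤ N' = hallD G N 1 from h2
  have hc : (⊤ : Subgroup G).lowerCentralSeries c ≤ hallD G N 1 := by
    have hm : ((⊤ : Subgroup G).lowerCentralSeries c).map (QuotientGroup.mk' (⁅N, N⁆ : Subgroup G))
        ≤ (⊤ : Subgroup (G ⧸ (⁅N, N⁆ : Subgroup G))).lowerCentralSeries c := by
      rw [Subgroup.map_lowerCentralSeries,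
        Subgroup.map_top_of_surjective _ (QuotientGroup.mk'_surjective _)]
    rw [h2, Subgroup.map_le_iff_le_comap] at hm
    have : Subgroup.comap (QuotientGroup.mk' (⁅N, N⁆ : Subgroup G)) ⊥
        = (⁅N, N⁆ : Subgroup G) := by
      rw [MonoidHom.comap_bot, QuotientGroup.ker_mk']
    rw [this] at hm
    exact hm
  -- Step 3: main induction
  have := hall_main G N hc k
  have hD : hallD G N (k + 1) ≤ hallD G N k := hallD_succ_le G N k
  rw [← le_bot_iff]
  exact this.trans (hD.trans_eq hDk)
end

section
/- Let G be a group, N ⊴ G a nilpotent normal subgroup of class 2, and suppose G/N' is nilpotent. Then G is nilpotent. -/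
open scoped commutatorElement

/-- Iterated commutator with `⊤`, peeling from the inside. -/
private def citer {G : Type*} [Group G] : ℕ → Subgroup G → Subgroup G
  | 0, X => X
  | m + 1, X => citer m ⁅X, (⊤ : Subgroup G)⁆

private lemma citer_mono {G : Type*} [Group G] (m : ℕ) {X Y : Subgroup G} (h : X ≤ Y) :
    citer m X ≤ citer m Y := by
  induction m generalizing X Y with
  | zero => exact h
  | succ m ih => exact ih (Subgroup.commutator_mono h le_rfl)

/-- Relative three subgroups lemma. -/
private lemma tsl {G : Type*} [Group G] (A B C K : Subgroup G) [K.Normal]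
    (h1 : ⁅⁅B, C⁆, A⁆ ≤ K) (h2 : ⁅⁅C, A⁆, B⁆ ≤ K) : ⁅⁅A, B⁆, C⁆ ≤ K := by
  have key : (⁅⁅A, B⁆, C⁆.map (QuotientGroup.mk' K)) = ⊥ := by
    rw [Subgroup.map_commutator, Subgroup.map_commutator]
    apply Subgroup.commutator_commutator_eq_bot_of_rotate
    · rw [← Subgroup.map_commutator, ← Subgroup.map_commutator, Subgroup.map_eq_bot_iff,
        QuotientGroup.ker_mk']
      exact h1
    · rw [← Subgroup.map_commutator, ← Subgroup.map_commutator, Subgroup.map_eq_bot_iff,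
        QuotientGroup.ker_mk']
      exact h2
  rwa [Subgroup.map_eq_bot_iff, QuotientGroup.ker_mk'] at key

private lemma comm_top_sup_le {G : Type*} [Group G] (X Y W : Subgroup G) [W.Normal]
    (hX : ⁅X, (⊤ : Subgroup G)⁆ ≤ W) (hY : ⁅Y, (⊤ : Subgroup G)⁆ ≤ W) :
    ⁅X ⊔ Y, (⊤ : Subgroup G)⁆ ≤ W := by
  set S := Subgroup.comap (QuotientGroup.mk' W) (Subgroup.center (G ⧸ W)) with hSdef
  have hmemS : ∀ g : G, g ∈ S ↔ ∀ t : G, ⁅g, t⁆ ∈ W := by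
    intro g
    simp only [hSdef, Subgroup.mem_comap, Subgroup.mem_center_iff]
    constructor
    · intro h t
      have h2 : (QuotientGroup.mk' W) ⁅g, t⁆ = 1 := by
        rw [map_commutatorElement, commutatorElement_eq_one_iff_mul_comm]
        exact (h ((QuotientGroup.mk' W) t)).symm
      rwa [← QuotientGroup.ker_mk' W, MonoidHom.mem_ker]
    · intro h q
      obtain ⟨t, rfl⟩ := QuotientGroup.mk'_surjective W q
      have h2 : (QuotientGroup.mk' W) ⁅g, t⁆ = 1 := by
        rw [← MonoidHom.mem_ker, QuotientGroup.ker_mk']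
        exact h t
      rw [map_commutatorElement, commutatorElement_eq_one_iff_mul_comm] at h2
      exact h2.symm
  rw [Subgroup.commutator_le] at hX hY ⊢
  have hXS : X ≤ S := fun g hg => (hmemS g).mpr fun t => hX g hg t (Subgroup.mem_top t)
  have hYS : Y ≤ S := fun g hg => (hmemS g).mpr fun t => hY g hg t (Subgroup.mem_top t)
  intro g hg t _
  exact (hmemS g).mp (sup_le hXS hYS hg) t

private lemma citer_normal {G : Type*} [Group G] (m : ℕ) {X : Subgroup G} (h : X.Normal) :
    (citer m X).Normal := by
  induction m generalizing X with
  | zero => exact h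
  | succ m ih => exact ih (@Subgroup.commutator_normal _ _ X ⊤ h _)

private lemma citer_sup {G : Type*} [Group G] (m : ℕ) (X Y : Subgroup G)
    (hX : X.Normal) (hY : Y.Normal) :
    citer m (X ⊔ Y) ≤ citer m X ⊔ citer m Y := by
  induction m generalizing X Y with
  | zero => exact le_rfl
  | succ m ih =>
    haveI := hX; haveI := hY
    have h1 : ⁅X ⊔ Y, (⊤ : Subgroup G)⁆ ≤ ⁅X, (⊤ : Subgroup G)⁆ ⊔ ⁅Y, (⊤ : Subgroup G)⁆ :=
      comm_top_sup_le X Y _ le_sup_left le_sup_right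
    calc citer (m + 1) (X ⊔ Y) = citer m ⁅X ⊔ Y, (⊤ : Subgroup G)⁆ := rfl
      _ ≤ citer m (⁅X, (⊤ : Subgroup G)⁆ ⊔ ⁅Y, (⊤ : Subgroup G)⁆) := citer_mono m h1
      _ ≤ citer m ⁅X, (⊤ : Subgroup G)⁆ ⊔ citer m ⁅Y, (⊤ : Subgroup G)⁆ :=
          ih _ _ inferInstance inferInstance
      _ = citer (m + 1) X ⊔ citer (m + 1) Y := rfl

private lemma lcs_citer {G : Type*} [Group G] (m d : ℕ) :
    citer m (lowerCentralSeries (⊤ : Subgroup G) d) = lowerCentralSeries (⊤ : Subgroup G) (d + m) := by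
  induction m generalizing d with
  | zero => rfl
  | succ m ih =>
    have : citer (m + 1) (lowerCentralSeries (⊤ : Subgroup G) d) = citer m (lowerCentralSeries (⊤ : Subgroup G) (d + 1)) := rfl
    rw [this, ih (d + 1)]
    congr 1
    omega

/-- special case of P. Hall's theorem: if `N ⊴ G` is nilpotent
of class at most 2 and `G/N'` is nilpotent, then `G` is nilpotent. -/
theorem stmt7 (G : Type*) [Group G] (N : Subgroup G) [N.Normal]
    (hN : lowerCentralSeries N 2 = ⊥)
    (hQ : Group.IsNilpotent (G ⧸ (⁅N, N⁆ : Subgroup G))) :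
    Group.IsNilpotent G := by
  set M : Subgroup G := ⁅N, N⁆ with hMdef
  have hMN : ⁅M, N⁆ = ⊥ := by
    exact hN
  obtain ⟨d, hd⟩ := nilpotent_iff_lowerCentralSeries.mp hQ
  have hdM : lowerCentralSeries (⊤ : Subgroup G) d ≤ M := by
    have h := (lowerCentralSeries.map (QuotientGroup.mk' M) d).trans hd.le
    rwa [le_bot_iff, Subgroup.map_eq_bot_iff, QuotientGroup.ker_mk'] at h
  set A : ℕ → Subgroup G := fun k => Nat.rec N (fun _ X => ⁅X, (⊤ : Subgroup G)⁆) k with hAdef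
  have hAsucc : ∀ k, A (k + 1) = ⁅A k, (⊤ : Subgroup G)⁆ := fun k => rfl
  have hAnormal : ∀ k, (A k).Normal := by
    intro k
    induction k with
    | zero => exact ‹N.Normal›
    | succ k ih => exact @Subgroup.commutator_normal _ _ (A k) ⊤ ih _
  have hAN : ∀ k, A k ≤ N := by
    intro k
    induction k with
    | zero => exact le_rfl
    | succ k ih =>
      haveI := hAnormal k
      exact (Subgroup.commutator_le_left (A k) ⊤).trans ih
  have hAlcs : ∀ k, A k ≤ lowerCentralSeries (⊤ : Subgroup G) k := by
    intro k
    induction k with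
    | zero => exact le_top
    | succ k ih => exact Subgroup.commutator_mono ih le_rfl
  have hAM : ∀ k, d ≤ k → A k ≤ M := fun k hk =>
    (hAlcs k).trans ((lowerCentralSeries_antitone _ hk).trans hdM)
  have key : ∀ i j, 2 * d ≤ i + j → ⁅A i, A j⁆ = ⊥ := by
    intro i j h
    rcases le_or_gt d i with hi | hi
    · exact le_bot_iff.mp ((Subgroup.commutator_mono (hAM i hi) (hAN j)).trans hMN.le)
    · have hj : d ≤ j := by omega
      rw [Subgroup.commutator_comm]
      exact le_bot_iff.mp ((Subgroup.commutator_mono (hAM j hj) (hAN i)).trans hMN.le)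
  have main : ∀ m i j, 2 * d ≤ i + j + m → citer m ⁅A i, A j⁆ = ⊥ := by
    intro m
    induction m with
    | zero => intro i j h; exact key i j (by omega)
    | succ m ih =>
      intro i j h
      haveI := hAnormal i
      haveI := hAnormal j
      haveI := hAnormal (i + 1)
      haveI := hAnormal (j + 1)
      haveI hn1 : ⁅A (i + 1), A j⁆.Normal :=
        @Subgroup.commutator_normal _ _ _ _ (hAnormal (i + 1)) (hAnormal j)
      haveI hn2 : ⁅A i, A (j + 1)⁆.Normal :=
        @Subgroup.commutator_normal _ _ _ _ (hAnormal i) (hAnormal (j + 1))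
      haveI hn3 : (⁅A (i + 1), A j⁆ ⊔ ⁅A i, A (j + 1)⁆).Normal := Subgroup.sup_normal _ _
      have h1 : ⁅⁅A i, A j⁆, (⊤ : Subgroup G)⁆ ≤ ⁅A (i + 1), A j⁆ ⊔ ⁅A i, A (j + 1)⁆ := by
        apply tsl
        · rw [← hAsucc j, Subgroup.commutator_comm]
          exact le_sup_right
        · rw [Subgroup.commutator_comm (⊤ : Subgroup G) (A i), ← hAsucc i]
          exact le_sup_left
      have h2 : citer (m + 1) ⁅A i, A j⁆ ≤ ⊥ := by
        calc citer (m + 1) ⁅A i, A j⁆ = citer m ⁅⁅A i, A j⁆, (⊤ : Subgroup G)⁆ := rfl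
          _ ≤ citer m (⁅A (i + 1), A j⁆ ⊔ ⁅A i, A (j + 1)⁆) := citer_mono m h1
          _ ≤ citer m ⁅A (i + 1), A j⁆ ⊔ citer m ⁅A i, A (j + 1)⁆ :=
              citer_sup m _ _ hn1 hn2
          _ = ⊥ := by rw [ih (i + 1) j (by omega), ih i (j + 1) (by omega), bot_sup_eq]
      exact le_bot_iff.mp h2
  rw [nilpotent_iff_lowerCentralSeries]
  refine ⟨d + 2 * d, ?_⟩
  have h0 : lowerCentralSeries (⊤ : Subgroup G) d ≤ ⁅A 0, A 0⁆ := hdM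
  have := (citer_mono (2 * d) h0).trans (main (2 * d) 0 0 (by omega)).le
  rwa [lcs_citer, le_bot_iff] at this
end

section
/- Let G be a group generated by elements t₁,…,t_d such that the normal closure of {t₁,…,t_d} generates G, and let k ≥ 2. Then every element of γ_k(G) can be written as [g₁,t₁]⋯[g_d,t_d] for some g_i ∈ γ_{k−1}(G), provided G = ⟨t₁,…,t_d⟩ and G is nilpotent (or finite). -/
open Subgroup

section aux

variable {M : Type*} [Monoid M]

/-- product of pointwise products when the first factors are central -/
lemma SP.prod_ofFn_mul : ∀ {d : ℕ} (f g : Fin d → M),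
    (∀ i (x : M), Commute (f i) x) →
    (List.ofFn fun i => f i * g i).prod = (List.ofFn f).prod * (List.ofFn g).prod := by
  intro d
  induction d with
  | zero => intro f g _; simp
  | succ n ih =>
    intro f g hf
    simp only [List.ofFn_succ, List.prod_cons]
    rw [ih (fun i => f i.succ) (fun i => g i.succ) (fun i x => hf i.succ x)]
    have h1 : Commute (g 0) (List.ofFn fun i : Fin n => f i.succ).prod := by
      apply Commute.list_prod_right
      intro x hx
      rw [List.mem_ofFn] at hx
      obtain ⟨i, rfl⟩ := hx
      exact (hf i.succ (g 0)).symm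
    calc f 0 * g 0 * ((List.ofFn fun i : Fin n => f i.succ).prod *
          (List.ofFn fun i : Fin n => g i.succ).prod)
        = f 0 * (g 0 * (List.ofFn fun i : Fin n => f i.succ).prod) *
          (List.ofFn fun i : Fin n => g i.succ).prod := by group
      _ = f 0 * ((List.ofFn fun i : Fin n => f i.succ).prod * g 0) *
          (List.ofFn fun i : Fin n => g i.succ).prod := by rw [h1.eq]
      _ = _ := by group

lemma SP.prod_ofFn_single : ∀ {d : ℕ} (f : Fin d → M) (i : Fin d),
    (∀ j, j ≠ i → f j = 1) → (List.ofFn f).prod = f i := by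
  intro d
  induction d with
  | zero => intro f i; exact i.elim0
  | succ n ih =>
    intro f i hj
    simp only [List.ofFn_succ, List.prod_cons]
    rcases i.eq_zero_or_eq_succ with rfl | ⟨i', rfl⟩
    · have : (List.ofFn fun j : Fin n => f j.succ).prod = 1 := by
        apply List.prod_eq_one
        intro x hx
        rw [List.mem_ofFn] at hx
        obtain ⟨j, rfl⟩ := hx
        exact hj j.succ (Fin.succ_ne_zero j)
      rw [this, mul_one]
    · rw [hj 0 (Fin.succ_ne_zero i').symm, one_mul]
      exact ih (fun j => f j.succ) i' fun j hji =>
        hj j.succ (by simpa [Fin.succ_inj] using hji)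

end aux

section segal

/-- the commutator convention of the statement -/
local notation "cmt" => fun (g t : _) => g⁻¹ * t⁻¹ * g * t

variable {G : Type*} [Group G]

lemma SP.cmt_mem {n : ℕ} {x : G} (hx : x ∈ (⊤ : Subgroup G).lowerCentralSeries n) (w : G) :
    x⁻¹ * w⁻¹ * x * w ∈ (⊤ : Subgroup G).lowerCentralSeries (n + 1) := by
  have : (⊤ : Subgroup G).lowerCentralSeries (n + 1) = ⁅(⊤ : Subgroup G).lowerCentralSeries n, (⊤ : Subgroup G)⁆ := rfl
  rw [this]
  have := Subgroup.commutator_mem_commutator (inv_mem hx) (Subgroup.mem_top w⁻¹)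
  simpa [commutatorElement_def, mul_assoc] using this

open scoped commutatorElement in
lemma SP.central {n : ℕ} (hc : (⊤ : Subgroup G).lowerCentralSeries (n + 2) = ⊥)
    {x : G} (hx : x ∈ (⊤ : Subgroup G).lowerCentralSeries (n + 1)) (w : G) : Commute x w := by
  have h : ⁅x, w⁆ ∈ (⊤ : Subgroup G).lowerCentralSeries (n + 2) := by
    have : (⊤ : Subgroup G).lowerCentralSeries (n + 2) = ⁅(⊤ : Subgroup G).lowerCentralSeries (n+1), (⊤ : Subgroup G)⁆ := rfl
    rw [this]
    exact Subgroup.commutator_mem_commutator hx (Subgroup.mem_top w)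
  rw [hc, Subgroup.mem_bot] at h
  exact commutatorElement_eq_one_iff_commute.mp h

/-- The central case: if `γ_{n+3} = 1` then every element of `γ_{n+2}` is a product
`[h₁,t₁]⋯[h_d,t_d]` with `h_i ∈ γ_{n+1}`. -/
lemma SP.central_case {d : ℕ} (t : Fin d → G)
    (hgen : Subgroup.closure (Set.range t) = ⊤) (n : ℕ)
    (hc : (⊤ : Subgroup G).lowerCentralSeries (n + 2) = ⊥) :
    ∀ z ∈ (⊤ : Subgroup G).lowerCentralSeries (n + 1), ∃ h : Fin d → G,
      (∀ i, h i ∈ (⊤ : Subgroup G).lowerCentralSeries n) ∧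
      z = (List.ofFn fun i : Fin d => (h i)⁻¹ * (t i)⁻¹ * h i * t i).prod := by
  -- the set of representable elements is a subgroup S
  set S : Subgroup G :=
    { carrier := { z | ∃ h : Fin d → G, (∀ i, h i ∈ (⊤ : Subgroup G).lowerCentralSeries n) ∧
        z = (List.ofFn fun i : Fin d => (h i)⁻¹ * (t i)⁻¹ * h i * t i).prod }
      one_mem' := by
        refine ⟨fun _ => 1, fun i => one_mem _, ?_⟩
        symm
        apply List.prod_eq_one
        intro x hx
        rw [List.mem_ofFn] at hx
        obtain ⟨i, rfl⟩ := hx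
        simp
      mul_mem' := by
        rintro a b ⟨h, hm, rfl⟩ ⟨h', hm', rfl⟩
        refine ⟨fun i => h i * h' i, fun i => mul_mem (hm i) (hm' i), ?_⟩
        have key : ∀ i : Fin d, (h i * h' i)⁻¹ * (t i)⁻¹ * (h i * h' i) * t i
            = ((h i)⁻¹ * (t i)⁻¹ * h i * t i) * ((h' i)⁻¹ * (t i)⁻¹ * h' i * t i) := by
          intro i
          have hcen := SP.central hc (SP.cmt_mem (hm i) (t i)) (h' i)
          calc (h i * h' i)⁻¹ * (t i)⁻¹ * (h i * h' i) * t i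
              = (h' i)⁻¹ * (((h i)⁻¹ * (t i)⁻¹ * h i * t i) * h' i) *
                ((h' i)⁻¹ * (t i)⁻¹ * h' i * t i) := by group
            _ = (h' i)⁻¹ * (h' i * ((h i)⁻¹ * (t i)⁻¹ * h i * t i)) *
                ((h' i)⁻¹ * (t i)⁻¹ * h' i * t i) := by rw [hcen.eq]
            _ = _ := by group
        have hfn : (fun i : Fin d => ((fun i => h i * h' i) i)⁻¹ * (t i)⁻¹ *
              ((fun i => h i * h' i) i) * t i)
            = fun i : Fin d => ((h i)⁻¹ * (t i)⁻¹ * h i * t i) *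
              ((h' i)⁻¹ * (t i)⁻¹ * h' i * t i) := funext key
        rw [hfn, SP.prod_ofFn_mul _ _ (fun i x => SP.central hc (SP.cmt_mem (hm i) (t i)) x)]
      inv_mem' := by
        rintro a ⟨h, hm, rfl⟩
        refine ⟨fun i => (h i)⁻¹, fun i => inv_mem (hm i), ?_⟩
        have key : ∀ i : Fin d, ((h i)⁻¹)⁻¹ * (t i)⁻¹ * (h i)⁻¹ * t i
            = ((h i)⁻¹ * (t i)⁻¹ * h i * t i)⁻¹ := by
          intro i
          have hcen := (SP.central hc (SP.cmt_mem (hm i) (t i)) (h i)).inv_left.inv_right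
          calc ((h i)⁻¹)⁻¹ * (t i)⁻¹ * (h i)⁻¹ * t i
              = h i * (((h i)⁻¹ * (t i)⁻¹ * h i * t i)⁻¹ * (h i)⁻¹) := by group
            _ = h i * ((h i)⁻¹ * ((h i)⁻¹ * (t i)⁻¹ * h i * t i)⁻¹) := by rw [hcen.eq]
            _ = _ := by group
        have : (List.ofFn fun i : Fin d => (h i)⁻¹ * (t i)⁻¹ * h i * t i).prod *
            (List.ofFn fun i : Fin d => ((h i)⁻¹)⁻¹ * (t i)⁻¹ * (h i)⁻¹ * t i).prod = 1 := by
          rw [← SP.prod_ofFn_mul _ _ (fun i x => SP.central hc (SP.cmt_mem (hm i) (t i)) x)]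
          apply List.prod_eq_one
          intro x hx
          rw [List.mem_ofFn] at hx
          obtain ⟨i, rfl⟩ := hx
          simp only [key i, mul_inv_cancel]
        exact (eq_inv_of_mul_eq_one_right this).symm } with hS
  -- every basic commutator [x,w], x ∈ γ_{n+1}, lies in S
  have hbasic : ∀ x ∈ (⊤ : Subgroup G).lowerCentralSeries n, ∀ w : G, x⁻¹ * w⁻¹ * x * w ∈ S := by
    intro x hx
    set T : Subgroup G :=
      { carrier := { w | x⁻¹ * w⁻¹ * x * w ∈ S }
        one_mem' := by
          have h1 : x⁻¹ * (1 : G)⁻¹ * x * 1 = 1 := by group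
          simp only [Set.mem_setOf_eq, h1]
          exact S.one_mem
        mul_mem' := by
          intro a b ha hb
          have hcen := SP.central hc (SP.cmt_mem hx a) b
          have : x⁻¹ * (a * b)⁻¹ * x * (a * b)
              = (x⁻¹ * b⁻¹ * x * b) * (x⁻¹ * a⁻¹ * x * a) := by
            calc x⁻¹ * (a * b)⁻¹ * x * (a * b)
                = (x⁻¹ * b⁻¹ * x * b) * (b⁻¹ * ((x⁻¹ * a⁻¹ * x * a) * b)) := by group
              _ = (x⁻¹ * b⁻¹ * x * b) * (b⁻¹ * (b * (x⁻¹ * a⁻¹ * x * a))) := by rw [hcen.eq]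
              _ = _ := by group
          rw [Set.mem_setOf_eq, this]
          exact mul_mem hb ha
        inv_mem' := by
          intro a ha
          have hcen := (SP.central hc (SP.cmt_mem hx a) a).inv_left.inv_right
          have : x⁻¹ * a⁻¹⁻¹ * x * a⁻¹ = (x⁻¹ * a⁻¹ * x * a)⁻¹ := by
            calc x⁻¹ * a⁻¹⁻¹ * x * a⁻¹
                = a * (((x⁻¹ * a⁻¹ * x * a)⁻¹) * a⁻¹) := by group
              _ = a * (a⁻¹ * ((x⁻¹ * a⁻¹ * x * a)⁻¹)) := by rw [hcen.eq]
              _ = _ := by group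
          rw [Set.mem_setOf_eq, this]
          exact inv_mem ha } with hT
    intro w
    have hw : w ∈ T := by
      have : (⊤ : Subgroup G) ≤ T := by
        rw [← hgen]
        apply Subgroup.closure_le T |>.mpr
        rintro w ⟨i, rfl⟩
        show x⁻¹ * (t i)⁻¹ * x * (t i) ∈ S
        refine ⟨fun j => if j = i then x else 1, ?_, ?_⟩
        · intro j
          by_cases hji : j = i <;> simp [hji, hx, one_mem]
        · rw [SP.prod_ofFn_single _ i]
          · simp
          · intro j hji
            simp [hji]
      exact this (Subgroup.mem_top w)
    exact hw
  intro z hz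
  have hle : (⊤ : Subgroup G).lowerCentralSeries (n + 1) ≤ S := by
    have h1 : (⊤ : Subgroup G).lowerCentralSeries (n + 1) = ⁅(⊤ : Subgroup G).lowerCentralSeries n, (⊤ : Subgroup G)⁆ := rfl
    rw [h1, Subgroup.commutator_le]
    intro p hp q _
    have := hbasic p⁻¹ (inv_mem hp) q⁻¹
    simpa [commutatorElement_def, mul_assoc] using this
  exact hle hz

universe u

lemma SP.key (d : ℕ) : ∀ (c : ℕ) (G : Type u) [Group G] (t : Fin d → G),
    Subgroup.closure (Set.range t) = ⊤ → (⊤ : Subgroup G).lowerCentralSeries c = ⊥ →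
    ∀ (m : ℕ) (y : G), y ∈ (⊤ : Subgroup G).lowerCentralSeries (m + 1) →
    ∃ g : Fin d → G, (∀ i, g i ∈ (⊤ : Subgroup G).lowerCentralSeries m) ∧
      y = (List.ofFn fun i : Fin d => (g i)⁻¹ * (t i)⁻¹ * g i * t i).prod := by
  intro c
  induction c with
  | zero =>
    intro G _ t hgen hbot m y hy
    have : y = 1 := by
      have := Subgroup.lowerCentralSeries_antitone _ (Nat.zero_le (m+1)) hy
      rwa [hbot, Subgroup.mem_bot] at this
    subst this
    refine ⟨fun _ => 1, fun i => one_mem _, ?_⟩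
    symm; apply List.prod_eq_one
    intro x hx; rw [List.mem_ofFn] at hx; obtain ⟨i, rfl⟩ := hx; simp
  | succ c' ih =>
    intro G _ t hgen hbot m y hy
    by_cases hmc : c' ≤ m
    · have : y = 1 := by
        have := Subgroup.lowerCentralSeries_antitone _ (Nat.succ_le_succ hmc) hy
        rwa [hbot, Subgroup.mem_bot] at this
      subst this
      refine ⟨fun _ => 1, fun i => one_mem _, ?_⟩
      symm; apply List.prod_eq_one
      intro x hx; rw [List.mem_ofFn] at hx; obtain ⟨i, rfl⟩ := hx; simp
    · push_neg at hmc
      -- m + 1 ≤ c'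
      set N := (⊤ : Subgroup G).lowerCentralSeries c' with hN
      let π : G →* G ⧸ N := QuotientGroup.mk' N
      have hsurj : Function.Surjective π := QuotientGroup.mk'_surjective N
      have hmap : ∀ j, Subgroup.map π ((⊤ : Subgroup G).lowerCentralSeries j)
          = (⊤ : Subgroup (G ⧸ N)).lowerCentralSeries j := by
        intro j
        induction j with
        | zero =>
          simpa using Subgroup.map_top_of_surjective π hsurj
        | succ j ihj =>
          have h1 : (⊤ : Subgroup G).lowerCentralSeries (j + 1)
              = ⁅(⊤ : Subgroup G).lowerCentralSeries j, (⊤ : Subgroup G)⁆ := rfl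
          have h2 : (⊤ : Subgroup (G ⧸ N)).lowerCentralSeries (j + 1)
              = ⁅(⊤ : Subgroup (G ⧸ N)).lowerCentralSeries j, (⊤ : Subgroup (G ⧸ N))⁆ := rfl
          rw [h1, h2, Subgroup.map_commutator, ihj, Subgroup.map_top_of_surjective π hsurj]
      have hQbot : (⊤ : Subgroup (G ⧸ N)).lowerCentralSeries c' = ⊥ := by
        rw [← hmap c', Subgroup.map_eq_bot_iff, QuotientGroup.ker_mk']
      have hQgen : Subgroup.closure (Set.range (π ∘ t)) = ⊤ := by
        rw [Set.range_comp, ← MonoidHom.map_closure, hgen]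
        exact Subgroup.map_top_of_surjective π hsurj
      have hyQ : π y ∈ (⊤ : Subgroup (G ⧸ N)).lowerCentralSeries (m + 1) := by
        rw [← hmap (m+1)]
        exact ⟨y, hy, rfl⟩
      obtain ⟨gQ, hgQ, heq⟩ := ih (G ⧸ N) (π ∘ t) hQgen hQbot m (π y) hyQ
      have hlift : ∀ i, ∃ a, a ∈ (⊤ : Subgroup G).lowerCentralSeries m ∧ π a = gQ i := by
        intro i
        have : gQ i ∈ Subgroup.map π ((⊤ : Subgroup G).lowerCentralSeries m) := by
          rw [hmap m]; exact hgQ i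
        obtain ⟨a, ha, hπ⟩ := this
        exact ⟨a, ha, hπ⟩
      choose g hg1 hg2 using hlift
      set P := (List.ofFn fun i : Fin d => (g i)⁻¹ * (t i)⁻¹ * g i * t i).prod with hP
      have hπP : π P = π y := by
        rw [hP, map_list_prod, List.map_ofFn, heq]
        congr 1
        rw [List.ofFn_inj]
        funext i
        simp [Function.comp, hg2 i]
      have hzN : y * P⁻¹ ∈ N := by
        have : π (y * P⁻¹) = 1 := by
          rw [map_mul, map_inv, hπP]
          group
        rwa [← QuotientGroup.ker_mk' N, MonoidHom.mem_ker]
      -- write c' = n + 1 with m ≤ n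
      obtain ⟨n, rfl⟩ : ∃ n, c' = n + 1 := ⟨c' - 1, by omega⟩
      have hmn : m ≤ n := by omega
      obtain ⟨h, hh1, hh2⟩ := SP.central_case t hgen n hbot (y * P⁻¹) hzN
      refine ⟨fun i => h i * g i, fun i =>
        mul_mem (Subgroup.lowerCentralSeries_antitone _ hmn (hh1 i)) (hg1 i), ?_⟩
      have key : ∀ i : Fin d, (h i * g i)⁻¹ * (t i)⁻¹ * (h i * g i) * t i
          = ((h i)⁻¹ * (t i)⁻¹ * h i * t i) * ((g i)⁻¹ * (t i)⁻¹ * g i * t i) := by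
        intro i
        have hcen := SP.central hbot (SP.cmt_mem (hh1 i) (t i)) (g i)
        calc (h i * g i)⁻¹ * (t i)⁻¹ * (h i * g i) * t i
            = (g i)⁻¹ * (((h i)⁻¹ * (t i)⁻¹ * h i * t i) * g i) *
              ((g i)⁻¹ * (t i)⁻¹ * g i * t i) := by group
          _ = (g i)⁻¹ * (g i * ((h i)⁻¹ * (t i)⁻¹ * h i * t i)) *
              ((g i)⁻¹ * (t i)⁻¹ * g i * t i) := by rw [hcen.eq]
          _ = _ := by group
      have : (List.ofFn fun i : Fin d => (h i * g i)⁻¹ * (t i)⁻¹ * (h i * g i) * t i).prod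
          = (List.ofFn fun i : Fin d => (h i)⁻¹ * (t i)⁻¹ * h i * t i).prod *
            (List.ofFn fun i : Fin d => (g i)⁻¹ * (t i)⁻¹ * g i * t i).prod := by
        rw [← SP.prod_ofFn_mul _ _ (fun i x => SP.central hbot (SP.cmt_mem (hh1 i) (t i)) x)]
        rw [funext key]
      rw [this, ← hh2, ← hP]
      group

end segal

/-- Segal, Prop. 1.2.7: if a nilpotent group `G` is generated by
`t₁,…,t_d` and `k ≥ 2`, then every element of `γ_k(G)` can be written as
`[g₁,t₁]⋯[g_d,t_d]` with `g_i ∈ γ_{k-1}(G)`, where `[g,t] = g⁻¹t⁻¹gt`.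
(In Mathlib's indexing, `γ_k(G) = lowerCentralSeries G (k-1)`.) -/
theorem stmt10 (G : Type*) [Group G] (hnil : Group.IsNilpotent G)
    (d : ℕ) (t : Fin d → G) (hgen : Subgroup.closure (Set.range t) = ⊤)
    (k : ℕ) (hk : 2 ≤ k) :
    ∀ y ∈ (⊤ : Subgroup G).lowerCentralSeries (k - 1), ∃ g : Fin d → G,
      (∀ i, g i ∈ (⊤ : Subgroup G).lowerCentralSeries (k - 2)) ∧
      y = (List.ofFn fun i : Fin d => (g i)⁻¹ * (t i)⁻¹ * g i * t i).prod := by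
  obtain ⟨c, hc⟩ := Subgroup.nilpotent_iff_lowerCentralSeries.mp hnil
  have hk1 : k - 1 = (k - 2) + 1 := by omega
  rw [hk1]
  intro y hy
  exact SP.key d c G t hgen hc (k - 2) y hy
end

section
/- Let G be a group, A = K/L an abelian normal section of G, and u, t ∈ G elements whose images commute modulo A. If a monic polynomial f ∈ ℤ[X] satisfies that f((t^u)^{-1}) and f(t) act as the zero endomorphism on A (in the conjugation action), then there is a monic polynomial h ∈ ℤ[X], depending only on f, such that h([u,t]) acts as the zero endomorphism on A. -/
open Polynomial TensorProduct

noncomputable def myH (f : Polynomial ℤ) (hf : f.Monic) : Polynomial ℤ :=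
  letI pb := AdjoinRoot.powerBasis' hf
  letI : Module.Free ℤ (AdjoinRoot f) := Module.Free.of_basis pb.basis
  letI : Module.Finite ℤ (AdjoinRoot f) := Module.Finite.of_basis pb.basis
  LinearMap.charpoly
    (Algebra.lmul ℤ (AdjoinRoot f ⊗[ℤ] AdjoinRoot f)
      ((AdjoinRoot.root f) ⊗ₜ (AdjoinRoot.root f)))

theorem myH_monic (f : Polynomial ℤ) (hf : f.Monic) : (myH f hf).Monic := by
  letI pb := AdjoinRoot.powerBasis' hf
  letI : Module.Free ℤ (AdjoinRoot f) := Module.Free.of_basis pb.basis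
  letI : Module.Finite ℤ (AdjoinRoot f) := Module.Finite.of_basis pb.basis
  exact LinearMap.charpoly_monic _

theorem myH_key (f : Polynomial ℤ) (hf : f.Monic) (S : Type) [CommRing S] (a b : S)
    (ha : aeval a f = 0) (hb : aeval b f = 0) : aeval (a * b) (myH f hf) = 0 := by
  letI pb := AdjoinRoot.powerBasis' hf
  letI : Module.Free ℤ (AdjoinRoot f) := Module.Free.of_basis pb.basis
  letI : Module.Finite ℤ (AdjoinRoot f) := Module.Finite.of_basis pb.basis
  set Q := AdjoinRoot f ⊗[ℤ] AdjoinRoot f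
  set z : Q := (AdjoinRoot.root f) ⊗ₜ (AdjoinRoot.root f) with hz_def
  have hz : aeval z (myH f hf) = 0 := by
    have h0 : aeval (Algebra.lmul ℤ Q z) (myH f hf) = 0 :=
      LinearMap.aeval_self_charpoly _
    have h1 : Algebra.lmul ℤ Q (aeval z (myH f hf)) = 0 := by
      rw [← Polynomial.aeval_algHom_apply]; exact h0
    have h2 := congrArg (fun m : Module.End ℤ Q => m 1) h1
    exact (mul_one _).symm.trans h2
  let Ψ : Q →ₐ[ℤ] S :=
    Algebra.TensorProduct.lift (AdjoinRoot.liftAlgHom f (Algebra.ofId ℤ S) a (by rw [← ha, aeval_def]; rfl)) (AdjoinRoot.liftAlgHom f (Algebra.ofId ℤ S) b (by rw [← hb, aeval_def]; rfl))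
      (fun _ _ => Commute.all _ _)
  have hΨz : Ψ z = a * b := by
    rw [hz_def]; rw [Algebra.TensorProduct.lift_tmul]; rw [AdjoinRoot.liftAlgHom_root, AdjoinRoot.liftAlgHom_root]
  rw [← hΨz, Polynomial.aeval_algHom_apply, hz, map_zero]


/-- Let `f ∈ ℤ[X]` be monic. There is a monic `h ∈ ℤ[X]`,
depending only on `f`, such that the following holds. Whenever a group `G`
acts by automorphisms on an abelian group `A` (the conjugation action on an
abelian normal section, encoded as `φ : G →* (End A)ˣ`), and `u, t ∈ G` are
such that the actions of `t^u = u⁻¹tu` and `t` on `A` commute, and both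
`f((t^u)⁻¹)` and `f(t)` are the zero endomorphism of `A`, then
`h([u,t])` is the zero endomorphism of `A`, where `[u,t] = u⁻¹t⁻¹ut`. -/
theorem stmt11 (f : Polynomial ℤ) (hf : f.Monic) :
    ∃ h : Polynomial ℤ, h.Monic ∧
      ∀ (G A : Type) [Group G] [AddCommGroup A]
        (φ : G →* (AddMonoid.End A)ˣ) (u t : G),
        Commute ((φ (u⁻¹ * t * u) : (AddMonoid.End A)ˣ) : AddMonoid.End A)
          ((φ t : (AddMonoid.End A)ˣ) : AddMonoid.End A) →
        Polynomial.aeval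
          ((φ ((u⁻¹ * t * u)⁻¹) : (AddMonoid.End A)ˣ) : AddMonoid.End A) f = 0 →
        Polynomial.aeval ((φ t : (AddMonoid.End A)ˣ) : AddMonoid.End A) f = 0 →
        Polynomial.aeval
          ((φ (u⁻¹ * t⁻¹ * u * t) : (AddMonoid.End A)ˣ) : AddMonoid.End A) h = 0 := by
  refine ⟨myH f hf, myH_monic f hf, ?_⟩
  intro G A _ _ φ u t hcomm ha hb
  set E := AddMonoid.End A
  set a : E := ((φ ((u⁻¹ * t * u)⁻¹) : Eˣ) : E) with ha_def
  set b : E := ((φ t : Eˣ) : E) with hb_def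
  have hab : Commute a b := by
    rw [ha_def, map_inv]
    exact hcomm.units_inv_left
  -- double centralizer
  set Z : Subring E := Subring.centralizer ({a, b} : Set E) with hZ_def
  set S : Subring E := Subring.centralizer (Z : Set E) with hS_def
  have haZ : a ∈ Z := by
    rw [hZ_def, Subring.mem_centralizer_iff]
    rintro g (rfl | rfl)
    · rfl
    · exact hab.symm
  have hbZ : b ∈ Z := by
    rw [hZ_def, Subring.mem_centralizer_iff]
    rintro g (rfl | rfl)
    · exact hab
    · rfl
  have hSZ : ∀ w ∈ S, w ∈ Z := by
    intro w hw
    rw [hZ_def, Subring.mem_centralizer_iff]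
    rintro g (rfl | rfl)
    · exact (Subring.mem_centralizer_iff.mp hw) a haZ
    · exact (Subring.mem_centralizer_iff.mp hw) b hbZ
  have haS : a ∈ S := by
    rw [hS_def, Subring.mem_centralizer_iff]
    intro g hg
    exact ((Subring.mem_centralizer_iff.mp hg) a (by left; rfl)).symm
  have hbS : b ∈ S := by
    rw [hS_def, Subring.mem_centralizer_iff]
    intro g hg
    exact ((Subring.mem_centralizer_iff.mp hg) b (by right; rfl)).symm
  letI : CommRing ↥S :=
    { (inferInstance : Ring ↥S) with
      mul_comm := fun x y => Subtype.ext
        ((Subring.mem_centralizer_iff.mp x.2) y.1 (hSZ y.1 y.2)).symm }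
  let ι : ↥S →ₐ[ℤ] E := (SubringClass.subtype S).toIntAlgHom
  have hι : Function.Injective ι := Subtype.val_injective
  set a' : ↥S := ⟨a, haS⟩
  set b' : ↥S := ⟨b, hbS⟩
  have ha' : aeval a' f = 0 := by
    apply hι
    rw [← Polynomial.aeval_algHom_apply, map_zero]
    exact ha
  have hb' : aeval b' f = 0 := by
    apply hι
    rw [← Polynomial.aeval_algHom_apply, map_zero]
    exact hb
  have hkey : aeval (a' * b') (myH f hf) = 0 := myH_key f hf ↥S a' b' ha' hb'
  have hfinal : aeval (a * b) (myH f hf) = 0 := by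
    have := congrArg ι hkey
    rw [← Polynomial.aeval_algHom_apply, map_zero] at this
    exact this
  have hgrp : (u⁻¹ * t⁻¹ * u * t) = (u⁻¹ * t * u)⁻¹ * t := by group
  rw [hgrp, map_mul, Units.val_mul]
  exact hfinal
end
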